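/- Let Q = Q(δ_1,…,δ_n) = −log μ(Σ_{i=1}^n (−1)^i δ_i), where δ_1,…,δ_n are i.i.d. uniform on the standard basis {e_1,…,e_d} of Z^d and μ is the law of Y_n = Σ_{i=1}^n (−1)^i δ_i. Then Var(Q) ≤ (n/2)((log d)^2 + 2). -/

import Mathlib

open MeasureTheory ProbabilityTheory

/-- The law `μ` of `Y_n = ∑_{i=1}^n (−1)^i δ_i`, where `δ_1, …, δ_n` are i.i.d.
uniform on the standard basis vectors of `ℤ^d`. -/
noncomputable def lawY (d n : ℕ) [NeZero d] : PMF (Fin d → ℤ) :=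
  PMF.map
    (fun f : Fin n → Fin d =>
      ∑ i : Fin n, ((-1 : ℤ) ^ ((i : ℕ) + 1)) • Pi.single (f i) (1 : ℤ))
    (PMF.uniformOfFintype (Fin n → Fin d))

/-- The random entropy `Q(δ_1, …, δ_n) = −log μ(Y_n)`, as a function of the i.i.d.
uniform draws `δ_i` (encoded as the indices `f i` of the chosen basis vectors). -/
noncomputable def randEntropy (d n : ℕ) [NeZero d] (f : Fin n → Fin d) : ℝ :=
  -Real.log
    ((lawY d n
        (∑ i : Fin n, ((-1 : ℤ) ^ ((i : ℕ) + 1)) • Pi.single (f i) (1 : ℤ))).toReal)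

section VarAuxSection
open Finset
open scoped ENNReal
namespace VarAux


variable {κ : Type*} [Fintype κ] [DecidableEq κ]

omit [DecidableEq κ] in
lemma sum_sq_mean {c : ℝ} (hcdef : c = (Fintype.card κ : ℝ)) (hc : 0 < c) (y : κ → ℝ) :
    ∑ a, (y a - (∑ b, y b) / c) ^ 2 = ∑ a, y a ^ 2 - (∑ a, y a) ^ 2 / c := by
  have hne : c ≠ 0 := ne_of_gt hc
  simp only [sub_sq, Finset.sum_add_distrib, Finset.sum_sub_distrib, ← Finset.sum_mul,
    ← Finset.mul_sum, Finset.sum_const, Finset.card_univ, nsmul_eq_mul, ← hcdef]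
  field_simp
  ring

omit [DecidableEq κ] in
lemma pair_sum_eq {c : ℝ} (hcdef : c = (Fintype.card κ : ℝ)) (x : κ → ℝ) :
    ∑ a, ∑ b, (x a - x b) ^ 2
      = 2 * c * (∑ a, x a ^ 2) - 2 * (∑ a, x a) ^ 2 := by
  have h : ∀ a, ∑ b, (x a - x b) ^ 2
      = c * x a ^ 2 - 2 * x a * (∑ b, x b) + ∑ b, x b ^ 2 := by
    intro a
    simp only [sub_sq, Finset.sum_add_distrib, Finset.sum_sub_distrib, ← Finset.mul_sum,
      Finset.sum_const, Finset.card_univ, nsmul_eq_mul, ← hcdef]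
    try ring
  simp only [h, Finset.sum_add_distrib, Finset.sum_sub_distrib, ← Finset.sum_mul,
    ← Finset.mul_sum, Finset.sum_const, Finset.card_univ, nsmul_eq_mul, ← hcdef]
  ring

omit [DecidableEq κ] in
lemma pair_sum_le {c : ℝ} (hcdef : c = (Fintype.card κ : ℝ)) (x : κ → ℝ) (L : ℝ) :
    ∑ a, ∑ b, (x a - x b) ^ 2 ≤ 2 * c * ∑ a, (x a - L) ^ 2 := by
  have h := pair_sum_eq hcdef (fun a => x a - L)
  simp only [sub_sub_sub_cancel_right] at h
  rw [h]
  nlinarith [sq_nonneg (∑ a, (x a - L))]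

omit [DecidableEq κ] in
lemma sq_sum_le {c : ℝ} (hcdef : c = (Fintype.card κ : ℝ)) (x : κ → ℝ) :
    (∑ a, x a) ^ 2 ≤ c * ∑ a, x a ^ 2 := by
  have h := sq_sum_le_card_mul_sum_sq (s := (Finset.univ : Finset κ)) (f := x)
  rw [Finset.card_univ] at h
  rw [hcdef]
  exact_mod_cast h

omit [DecidableEq κ] in
lemma sum_cons {n : ℕ} (φ : (Fin (n+1) → κ) → ℝ) :
    ∑ f, φ f = ∑ a : κ, ∑ g : Fin n → κ, φ (Fin.cons a g) := by
  rw [← (Fin.consEquiv (fun _ => κ)).sum_comp φ, Fintype.sum_prod_type]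
  rfl

theorem efron_stein [Nonempty κ] : ∀ (n : ℕ) (F : (Fin n → κ) → ℝ),
    (∑ f, F f ^ 2) / (Fintype.card κ : ℝ) ^ n
        - ((∑ f, F f) / (Fintype.card κ : ℝ) ^ n) ^ 2 ≤
      (1/2) * ∑ j : Fin n, (∑ f, ∑ b, (F f - F (Function.update f j b)) ^ 2) /
        (Fintype.card κ : ℝ) ^ (n + 1) := by
  intro n
  induction n with
  | zero =>
    intro F
    simp [Fintype.sum_unique]
  | succ n ih =>
    intro F
    set c : ℝ := (Fintype.card κ : ℝ) with hcdef
    have hc : (0:ℝ) < c := by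
      rw [hcdef]; exact_mod_cast Fintype.card_pos
    have hne : c ≠ 0 := ne_of_gt hc
    set G : (Fin n → κ) → ℝ := fun g => (∑ a, F (Fin.cons a g)) / c with hG
    have hSF : ∑ f, F f = c * ∑ g, G g := by
      rw [sum_cons F, Finset.sum_comm, Finset.mul_sum]
      refine Finset.sum_congr rfl fun g _ => ?_
      rw [hG]; field_simp
    have hS2 : ∀ g : Fin n → κ, ∑ a, (F (Fin.cons a g)) ^ 2
        = ∑ a, (F (Fin.cons a g) - G g) ^ 2 + c * (G g) ^ 2 := by
      intro g
      have h := sum_sq_mean hcdef hc (fun a => F (Fin.cons a g))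
      rw [hG]
      rw [h]
      field_simp
      ring
    have hS2F : ∑ f, F f ^ 2
        = (∑ g, ∑ a, (F (Fin.cons a g) - G g) ^ 2) + c * ∑ g, (G g) ^ 2 := by
      rw [sum_cons (fun f => F f ^ 2), Finset.sum_comm, Finset.mul_sum,
        ← Finset.sum_add_distrib]
      exact Finset.sum_congr rfl fun g _ => hS2 g
    set D : ℝ := (∑ g, ∑ a, (F (Fin.cons a g) - G g) ^ 2) / c ^ (n+1) with hD
    have hdecomp :
        (∑ f, F f ^ 2) / c ^ (n+1) - ((∑ f, F f) / c ^ (n+1)) ^ 2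
          = D + ((∑ g, G g ^ 2) / c ^ n - ((∑ g, G g) / c ^ n) ^ 2) := by
      rw [hS2F, hSF, hD]
      field_simp
      ring
    have hzero : ∑ f, ∑ b, (F f - F (Function.update f 0 b)) ^ 2
        = 2 * c * (∑ g, ∑ a, (F (Fin.cons a g) - G g) ^ 2) := by
      rw [sum_cons (fun f => ∑ b, (F f - F (Function.update f 0 b)) ^ 2), Finset.sum_comm,
        Finset.mul_sum]
      refine Finset.sum_congr rfl fun g _ => ?_
      have hupd : ∀ a b : κ, F (Function.update (Fin.cons a g) 0 b) = F (Fin.cons b g) := by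
        intro a b; rw [Fin.update_cons_zero]
      calc ∑ a, ∑ b, (F (Fin.cons a g) - F (Function.update (Fin.cons a g) 0 b)) ^ 2
          = ∑ a, ∑ b, ((fun a => F (Fin.cons a g)) a - (fun a => F (Fin.cons a g)) b) ^ 2 := by
            simp only [hupd]
        _ = 2 * c * (∑ a, (F (Fin.cons a g))^2) - 2 * (∑ a, F (Fin.cons a g)) ^ 2 :=
            pair_sum_eq hcdef _
        _ = 2 * c * ∑ a, (F (Fin.cons a g) - G g) ^ 2 := by
            rw [hS2 g, hG]
            field_simp
            ring
    have hsucc : ∀ j : Fin n,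
        (∑ g, ∑ b, (G g - G (Function.update g j b)) ^ 2)
          ≤ (∑ f, ∑ b, (F f - F (Function.update f j.succ b)) ^ 2) / c := by
      intro j
      have key : ∀ (g : Fin n → κ) (b : κ), (G g - G (Function.update g j b)) ^ 2
          ≤ (∑ a, (F (Fin.cons a g)
              - F (Function.update (Fin.cons a g) j.succ b)) ^ 2) / c := by
        intro g b
        have hz : G g - G (Function.update g j b)
            = (∑ a, (F (Fin.cons a g)
                - F (Function.update (Fin.cons a g) j.succ b))) / c := by
          simp only [hG, ← Fin.cons_update, Finset.sum_sub_distrib, sub_div]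
        rw [hz, div_pow]
        have hcs := sq_sum_le hcdef
          (fun a => F (Fin.cons a g) - F (Function.update (Fin.cons a g) j.succ b))
        calc (∑ a, (F (Fin.cons a g) - F (Function.update (Fin.cons a g) j.succ b))) ^ 2 / c ^ 2
            ≤ (c * ∑ a, (F (Fin.cons a g)
                - F (Function.update (Fin.cons a g) j.succ b)) ^ 2) / c ^ 2 := by
              gcongr
          _ = (∑ a, (F (Fin.cons a g)
                - F (Function.update (Fin.cons a g) j.succ b)) ^ 2) / c := by
              field_simp
      calc ∑ g, ∑ b, (G g - G (Function.update g j b)) ^ 2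
          ≤ ∑ g : Fin n → κ, ∑ b : κ, (∑ a, (F (Fin.cons a g)
              - F (Function.update (Fin.cons a g) j.succ b)) ^ 2) / c :=
            Finset.sum_le_sum fun g _ => Finset.sum_le_sum fun b _ => key g b
        _ = (∑ f, ∑ b, (F f - F (Function.update f j.succ b)) ^ 2) / c := by
            rw [sum_cons (fun f => ∑ b, (F f - F (Function.update f j.succ b)) ^ 2)]
            simp only [← Finset.sum_div]
            congr 1
            conv_rhs => rw [Finset.sum_comm]
            exact Finset.sum_congr rfl fun g _ => Finset.sum_comm
    -- assemble
    rw [hdecomp, Fin.sum_univ_succ]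
    have hmain := ih G
    have h0 : D = (1/2) * ((∑ f, ∑ b, (F f - F (Function.update f 0 b)) ^ 2) / c ^ (n+1+1)) := by
      rw [hzero, hD]
      field_simp
      ring
    have hsum : ∑ j : Fin n, (∑ g, ∑ b, (G g - G (Function.update g j b)) ^ 2) / c ^ (n+1)
        ≤ ∑ j : Fin n, (∑ f, ∑ b, (F f - F (Function.update f j.succ b)) ^ 2) / c ^ (n+1+1) := by
      refine Finset.sum_le_sum fun j _ => ?_
      have h := hsucc j
      calc (∑ g, ∑ b, (G g - G (Function.update g j b)) ^ 2) / c ^ (n+1)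
          ≤ ((∑ f, ∑ b, (F f - F (Function.update f j.succ b)) ^ 2) / c) / c ^ (n+1) := by
            gcongr
          _ = (∑ f, ∑ b, (F f - F (Function.update f j.succ b)) ^ 2) / c ^ (n+1+1) := by
            rw [div_div, mul_comm, ← pow_succ]
    linarith [hmain, hsum, h0]


variable (d n : ℕ) [NeZero d]

def SS (f : Fin n → Fin d) : Fin d → ℤ :=
  ∑ i : Fin n, ((-1 : ℤ) ^ ((i : ℕ) + 1)) • Pi.single (f i) (1 : ℤ)

def NN (y : Fin d → ℤ) : ℕ :=
  (Finset.univ.filter fun f : Fin n → Fin d => SS d n f = y).card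

lemma hd0 : 0 < (d:ℝ) := by
  have := Nat.pos_of_ne_zero (NeZero.ne d); exact_mod_cast this

lemma lawY_toReal (y : Fin d → ℤ) :
    (lawY d n y).toReal = (NN d n y : ℝ) / (d:ℝ)^n := by
  have h1 : (lawY d n) y
      = ((NN d n y : ℝ≥0∞)) * ((d:ℝ≥0∞)^n)⁻¹ := by
    rw [lawY, PMF.map_apply, tsum_fintype]
    calc _
        = ∑ f : Fin n → Fin d, if SS d n f = y then ((d:ℝ≥0∞)^n)⁻¹ else 0 := by
          refine Finset.sum_congr rfl fun f _ => ?_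
          rw [PMF.uniformOfFintype_apply]
          have hcard : (Fintype.card (Fin n → Fin d) : ℝ≥0∞) = (d:ℝ≥0∞)^n := by
            rw [Fintype.card_fun, Fintype.card_fin, Fintype.card_fin]
            push_cast
            ring
          rw [hcard]
          simp only [SS]
          split_ifs with h1 h2 h3
          · exact (if_pos (show SS d n f = y from h2)).symm
          · exact absurd h1.symm h2
          · exact absurd h3.symm h1
          · exact (if_neg (show ¬ SS d n f = y from h3)).symm
      _ = ∑ f ∈ Finset.univ.filter (fun f : Fin n → Fin d => SS d n f = y),
            ((d:ℝ≥0∞)^n)⁻¹ := (Finset.sum_filter _ _).symm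
      _ = (NN d n y : ℝ≥0∞) * ((d:ℝ≥0∞)^n)⁻¹ := by
          rw [Finset.sum_const, NN, nsmul_eq_mul]
  rw [h1, ENNReal.toReal_mul, ENNReal.toReal_inv]
  simp only [ENNReal.toReal_natCast, ENNReal.toReal_pow]
  rw [div_eq_mul_inv]

lemma NN_pos (f : Fin n → Fin d) : 0 < NN d n (SS d n f) := by
  rw [NN, Finset.card_pos]
  exact ⟨f, by simp⟩

lemma randEntropy_eq (f : Fin n → Fin d) :
    randEntropy d n f = Real.log ((d:ℝ)^n) - Real.log (NN d n (SS d n f)) := by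
  have h : randEntropy d n f = -Real.log ((lawY d n (SS d n f)).toReal) := rfl
  rw [h, lawY_toReal, Real.log_div]
  · ring
  · have := NN_pos d n f
    positivity
  · have := hd0 d
    positivity


section PerCoord
variable {d n : ℕ} [NeZero d]

def ww (d : ℕ) {n : ℕ} (j : Fin n) (c : Fin d) : Fin d → ℤ :=
  ((-1 : ℤ) ^ ((j : ℕ) + 1)) • Pi.single c 1

def ZZ {d : ℕ} {n : ℕ} (j : Fin n) (f : Fin n → Fin d) : Fin d → ℤ :=
  SS d n f - ww d j (f j)

def MM {d : ℕ} {n : ℕ} (j : Fin n) (z : Fin d → ℤ) : ℕ :=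
  (Finset.univ.filter fun f : Fin n → Fin d => ZZ j f = z).card

omit [NeZero d] in
lemma SS_update (j : Fin n) (f : Fin n → Fin d) (c : Fin d) :
    SS d n (Function.update f j c) = ZZ j f + ww d j c := by
  have hSSw : ∀ g : Fin n → Fin d, SS d n g = ∑ i : Fin n, ww d i (g i) := fun g => rfl
  have key : ∀ g : Fin n → Fin d, SS d n g
      = ww d j (g j) + ∑ i ∈ Finset.univ.erase j, ww d i (g i) := by
    intro g
    rw [hSSw, ← Finset.add_sum_erase _ _ (Finset.mem_univ j)]
  have herase : ∑ i ∈ Finset.univ.erase j, ww d i ((Function.update f j c) i)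
      = ∑ i ∈ Finset.univ.erase j, ww d i (f i) := by
    refine Finset.sum_congr rfl fun i hi => ?_
    rw [Function.update_of_ne (Finset.ne_of_mem_erase hi)]
  rw [key, Function.update_self, herase, ZZ, key f]
  abel

omit [NeZero d] in
lemma SS_self (j : Fin n) (f : Fin n → Fin d) :
    SS d n f = ZZ j f + ww d j (f j) := by
  conv_lhs => rw [← Function.update_eq_self j f]
  rw [SS_update]

omit [NeZero d] in
lemma ZZ_update (j : Fin n) (f : Fin n → Fin d) (c : Fin d) :
    ZZ j (Function.update f j c) = ZZ j f := by
  rw [ZZ, SS_update, Function.update_self, add_sub_cancel_right]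

omit [NeZero d] in
lemma MM_pos (j : Fin n) (f : Fin n → Fin d) : 0 < MM j (ZZ j f) := by
  rw [MM, Finset.card_pos]
  exact ⟨f, by simp⟩

omit [NeZero d] in
lemma MM_le (j : Fin n) (z : Fin d → ℤ) (c : Fin d) :
    MM j z ≤ d * NN d n (z + ww d j c) := by
  rw [MM, NN]
  have hcd : d = Fintype.card (Fin d) := (Fintype.card_fin d).symm
  refine Finset.card_le_mul_card_image_of_maps_to
    (f := fun f => Function.update f j c) ?_ d ?_
  · intro f hf
    simp only [Finset.mem_filter, Finset.mem_univ, true_and] at hf ⊢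
    rw [SS_update, hf]
  · intro y _
    calc ((Finset.univ.filter fun f : Fin n → Fin d => ZZ j f = z).filter
            fun x => Function.update x j c = y).card
        ≤ (Finset.univ : Finset (Fin d)).card := by
          refine Finset.card_le_card_of_injOn (fun x => x j) (fun x _ => Finset.mem_univ _) ?_
          intro x hx x' hx' hxx
          simp only [Finset.coe_filter, Set.mem_setOf_eq] at hx hx'
          have h1 : Function.update x j c = Function.update x' j c := hx.2.trans hx'.2.symm
          funext i
          by_cases hij : i = j
          · subst hij; exact hxx
          · have := congrFun h1 i
            rwa [Function.update_of_ne hij, Function.update_of_ne hij] at this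
      _ = d := by simp

end PerCoord
section PerCoord2
variable {d n : ℕ} [NeZero d]

omit [NeZero d] in
lemma regroup (j : Fin n) (K : (Fin n → Fin d) → Fin d → ℝ)
    (hK : ∀ f c, K (Function.update f j c) = K f) :
    ∑ f, ∑ c, K f c = (d:ℝ) * ∑ f, K f (f j) := by
  have hσ : Function.Involutive
      (fun p : (Fin n → Fin d) × Fin d => (Function.update p.1 j p.2, p.1 j)) := by
    rintro ⟨f, c⟩
    simp only [Prod.mk.injEq, Function.update_self]
    constructor
    · funext i
      by_cases hij : i = j
      · subst hij; rw [Function.update_self]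
      · rw [Function.update_of_ne hij, Function.update_of_ne hij]
    · trivial
  calc ∑ f, ∑ c, K f c
      = ∑ p : (Fin n → Fin d) × Fin d, K p.1 p.2 := (Fintype.sum_prod_type' _).symm
    _ = ∑ p : (Fin n → Fin d) × Fin d, K (Function.update p.1 j p.2) (p.1 j) :=
        (Fintype.sum_bijective _ hσ.bijective
          (fun p => K (Function.update p.1 j p.2) (p.1 j))
          (fun p => K p.1 p.2) (fun p => rfl)).symm
    _ = ∑ p : (Fin n → Fin d) × Fin d, K p.1 (p.1 j) := by
        refine Finset.sum_congr rfl fun p _ => ?_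
        rw [hK]
    _ = ∑ f : Fin n → Fin d, ∑ _c : Fin d, K f (f j) :=
        Fintype.sum_prod_type (fun p : (Fin n → Fin d) × Fin d => K p.1 (p.1 j))
    _ = (d:ℝ) * ∑ f, K f (f j) := by
        simp only [Finset.sum_const, Finset.card_univ, Fintype.card_fin, nsmul_eq_mul]
        rw [← Finset.mul_sum]

omit [NeZero d] in
lemma fiber_bound (j : Fin n) (c : Fin d) :
    ∑ f : Fin n → Fin d, (NN d n (ZZ j f + ww d j c) : ℝ) / (MM j (ZZ j f) : ℝ)
      ≤ (d:ℝ)^n := by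
  have hNN : ∀ w : Fin d → ℤ, (NN d n w : ℝ)
      = ∑ f' : Fin n → Fin d, if SS d n f' = w then (1:ℝ) else 0 := by
    intro w
    rw [NN, Finset.card_filter]
    push_cast
    exact Finset.sum_congr rfl fun f _ => by split_ifs <;> simp
  calc ∑ f : Fin n → Fin d, (NN d n (ZZ j f + ww d j c) : ℝ) / (MM j (ZZ j f) : ℝ)
      = ∑ f : Fin n → Fin d, ∑ f' : Fin n → Fin d,
          (if ZZ j f = SS d n f' - ww d j c then (1:ℝ) / (MM j (ZZ j f) : ℝ) else 0) := by
        refine Finset.sum_congr rfl fun f _ => ?_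
        rw [hNN, Finset.sum_div]
        refine Finset.sum_congr rfl fun f' _ => ?_
        have hiff : (SS d n f' = ZZ j f + ww d j c) ↔ (ZZ j f = SS d n f' - ww d j c) := by
          constructor
          · intro h; rw [h, add_sub_cancel_right]
          · intro h; rw [h, sub_add_cancel]
        by_cases h : ZZ j f = SS d n f' - ww d j c
        · rw [if_pos (hiff.mpr h), if_pos h]
        · rw [if_neg (fun hh => h (hiff.mp hh)), if_neg h]
          exact zero_div _
    _ = ∑ f' : Fin n → Fin d, ∑ f : Fin n → Fin d,
          (if ZZ j f = SS d n f' - ww d j c then (1:ℝ) / (MM j (ZZ j f) : ℝ) else 0) :=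
        Finset.sum_comm
    _ ≤ ∑ f' : Fin n → Fin d, (1:ℝ) := by
        refine Finset.sum_le_sum fun f' _ => ?_
        set w' := SS d n f' - ww d j c with hw'
        calc ∑ f : Fin n → Fin d,
              (if ZZ j f = w' then (1:ℝ) / (MM j (ZZ j f) : ℝ) else 0)
            = ∑ f : Fin n → Fin d, (if ZZ j f = w' then (1:ℝ) / (MM j w' : ℝ) else 0) := by
              refine Finset.sum_congr rfl fun f _ => ?_
              by_cases h : ZZ j f = w'
              · rw [if_pos h, if_pos h, h]
              · rw [if_neg h, if_neg h]
          _ = ((Finset.univ.filter fun f : Fin n → Fin d => ZZ j f = w').card : ℝ)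
                * ((1:ℝ) / (MM j w' : ℝ)) := by
              rw [← Finset.sum_filter, Finset.sum_const, nsmul_eq_mul]
          _ = (MM j w' : ℝ) * ((1:ℝ) / (MM j w' : ℝ)) := by rw [MM]
          _ ≤ 1 := by
              rcases Nat.eq_zero_or_pos (MM j w') with h0 | hpos
              · rw [h0]; norm_num
              · have : (0:ℝ) < (MM j w' : ℝ) := by exact_mod_cast hpos
                rw [mul_one_div, div_self (ne_of_gt this)]
    _ = (d:ℝ)^n := by
        rw [Finset.sum_const, Finset.card_univ, Fintype.card_fun, Fintype.card_fin,
          Fintype.card_fin, nsmul_eq_mul]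
        push_cast
        ring

lemma exp_cubic {v : ℝ} (hv : 0 ≤ v) : 6 + 6*v + 3*v^2 + v^3 ≤ 6 * Real.exp v := by
  have h4 := Real.sum_le_exp_of_nonneg hv 4
  have heval : ∑ i ∈ Finset.range 4, v^i / (Nat.factorial i)
      = 1 + v + v^2/2 + v^3/6 := by
    rw [Finset.sum_range_succ, Finset.sum_range_succ, Finset.sum_range_succ,
      Finset.sum_range_succ, Finset.sum_range_zero]
    norm_num [Nat.factorial]
  rw [heval] at h4
  linarith

lemma poly_aux {L v : ℝ} (hL : 0 ≤ L) (hv : 0 ≤ v) :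
    6*v^2 + 12*L*v ≤ (L^2+1) * (6 + 6*v + 3*v^2 + v^3) := by
  nlinarith [mul_nonneg hv (sq_nonneg (v-2)), sq_nonneg (v-2),
    mul_nonneg hv (sq_nonneg (L-1)), sq_nonneg L,
    mul_nonneg (mul_nonneg hL hL) (sq_nonneg v),
    mul_nonneg (mul_nonneg (mul_nonneg hL hL) hv) (sq_nonneg v)]

lemma logsq_bound {L u : ℝ} (hL : 0 ≤ L) (hu : 0 ≤ u) :
    (u - L)^2 ≤ L^2 + (L^2 + 1) * Real.exp (u - 2*L) := by
  rcases le_or_gt u (2*L) with h | h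
  · nlinarith [Real.exp_nonneg (u - 2*L)]
  · have hv : 0 ≤ u - 2*L := by linarith
    have h1 := exp_cubic hv
    have h2 := poly_aux hL hv
    have h3 : (L^2+1) * (6 + 6*(u-2*L) + 3*(u-2*L)^2 + (u-2*L)^3)
        ≤ (L^2+1) * (6 * Real.exp (u - 2*L)) :=
      mul_le_mul_of_nonneg_left h1 (by positivity)
    nlinarith [h2, h3]

end PerCoord2
section PerCoord3
variable {d n : ℕ} [NeZero d]

lemma percoord (j : Fin n) :
    ∑ f : Fin n → Fin d, ∑ b : Fin d,
        (randEntropy d n f - randEntropy d n (Function.update f j b))^2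
      ≤ ((Real.log d)^2 + 2) * (d:ℝ)^(n+1) := by
  have hd : (0:ℝ) < d := hd0 d
  have hd1 : (1:ℝ) ≤ d := by
    have : 1 ≤ d := Nat.one_le_iff_ne_zero.mpr (NeZero.ne d)
    exact_mod_cast this
  set L : ℝ := Real.log d / 2 with hLdef
  have hlog : Real.log d = 2 * L := by rw [hLdef]; ring
  have hL : 0 ≤ L := by
    rw [hLdef]
    exact div_nonneg (Real.log_nonneg hd1) (by norm_num)
  have hM : ∀ f : Fin n → Fin d, (0:ℝ) < (MM j (ZZ j f) : ℝ) := fun f => by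
    exact_mod_cast MM_pos j f
  have hNnat : ∀ (f : Fin n → Fin d) (c : Fin d), 0 < NN d n (ZZ j f + ww d j c) := by
    intro f c
    rcases Nat.eq_zero_or_pos (NN d n (ZZ j f + ww d j c)) with h0 | h
    · exfalso
      have h2 := MM_le j (ZZ j f) c
      rw [h0, Nat.mul_zero] at h2
      exact absurd (Nat.le_zero.mp h2) (Nat.pos_iff_ne_zero.mp (MM_pos j f))
    · exact h
  have hN : ∀ (f : Fin n → Fin d) (c : Fin d),
      (0:ℝ) < (NN d n (ZZ j f + ww d j c) : ℝ) := fun f c => by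
    exact_mod_cast hNnat f c
  have hx1 : ∀ (f : Fin n → Fin d) (c : Fin d),
      (1:ℝ) ≤ ((d:ℝ) * (NN d n (ZZ j f + ww d j c) : ℝ)) / (MM j (ZZ j f) : ℝ) := by
    intro f c
    rw [one_le_div (hM f)]
    have h2 := MM_le j (ZZ j f) c
    exact_mod_cast h2
  set y : (Fin n → Fin d) → Fin d → ℝ :=
    fun f c => Real.log (((d:ℝ) * (NN d n (ZZ j f + ww d j c) : ℝ))
      / (MM j (ZZ j f) : ℝ)) with hy
  have hy0 : ∀ f c, 0 ≤ y f c := fun f c => Real.log_nonneg (hx1 f c)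
  have hylog : ∀ f c, y f c = Real.log d + Real.log (NN d n (ZZ j f + ww d j c) : ℝ)
      - Real.log (MM j (ZZ j f) : ℝ) := by
    intro f c
    simp only [hy]
    rw [Real.log_div (ne_of_gt (mul_pos hd (hN f c))) (ne_of_gt (hM f)),
      Real.log_mul (ne_of_gt hd) (ne_of_gt (hN f c))]
  have hyexp : ∀ f c, Real.exp (y f c - 2*L)
      = (NN d n (ZZ j f + ww d j c) : ℝ) / (MM j (ZZ j f) : ℝ) := by
    intro f c
    rw [Real.exp_sub]
    have h2L : Real.exp (2*L) = (d:ℝ) := by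
      rw [← hlog]
      exact Real.exp_log hd
    have hexpy : Real.exp (y f c)
        = ((d:ℝ) * (NN d n (ZZ j f + ww d j c) : ℝ)) / (MM j (ZZ j f) : ℝ) := by
      simp only [hy]
      exact Real.exp_log (div_pos (mul_pos hd (hN f c)) (hM f))
    rw [hexpy, h2L, div_div, mul_comm ((MM j (ZZ j f) : ℝ)) ((d:ℝ)),
      mul_div_mul_left _ _ (ne_of_gt hd)]
  have hyinv : ∀ (f : Fin n → Fin d) (a c : Fin d),
      y (Function.update f j a) c = y f c := by
    intro f a c
    simp only [hy, ZZ_update]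
  have hQd : ∀ (f : Fin n → Fin d) (b : Fin d),
      (randEntropy d n f - randEntropy d n (Function.update f j b))^2
        = (y f (f j) - y f b)^2 := by
    intro f b
    have h1 : randEntropy d n f - randEntropy d n (Function.update f j b)
        = Real.log (NN d n (ZZ j f + ww d j b) : ℝ)
          - Real.log (NN d n (ZZ j f + ww d j (f j)) : ℝ) := by
      rw [randEntropy_eq, randEntropy_eq, SS_update, SS_self j f]
      ring
    rw [h1, hylog, hylog]
    ring
  set K : (Fin n → Fin d) → Fin d → ℝ := fun f c => ∑ b, (y f c - y f b)^2 with hK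
  have hKinv : ∀ (f : Fin n → Fin d) (c : Fin d), K (Function.update f j c) = K f := by
    intro f c
    funext c'
    simp only [hK]
    exact Finset.sum_congr rfl fun b _ => by rw [hyinv, hyinv]
  have step1 : ∑ f : Fin n → Fin d, ∑ b : Fin d,
      (randEntropy d n f - randEntropy d n (Function.update f j b))^2
        = ∑ f : Fin n → Fin d, K f (f j) := by
    refine Finset.sum_congr rfl fun f _ => ?_
    simp only [hK]
    exact Finset.sum_congr rfl fun b _ => hQd f b
  have step2 := regroup j K hKinv
  have hcard : (d:ℝ) = (Fintype.card (Fin d) : ℝ) := by simp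
  have step3 : ∑ f : Fin n → Fin d, ∑ c : Fin d, K f c
      ≤ ∑ f : Fin n → Fin d, (2*(d:ℝ) * ∑ c : Fin d, (y f c - L)^2) := by
    refine Finset.sum_le_sum fun f _ => ?_
    have h := pair_sum_le hcard (y f) L
    simp only [hK]
    exact h
  have step4 : ∀ f : Fin n → Fin d, ∑ c : Fin d, (y f c - L)^2
      ≤ (d:ℝ)*L^2 + (L^2+1) * ∑ c : Fin d,
          (NN d n (ZZ j f + ww d j c) : ℝ) / (MM j (ZZ j f) : ℝ) := by
    intro f
    calc ∑ c : Fin d, (y f c - L)^2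
        ≤ ∑ c : Fin d, (L^2 + (L^2+1) * Real.exp (y f c - 2*L)) :=
          Finset.sum_le_sum fun c _ => logsq_bound hL (hy0 f c)
      _ = (d:ℝ)*L^2 + (L^2+1) * ∑ c : Fin d, Real.exp (y f c - 2*L) := by
          rw [Finset.sum_add_distrib, Finset.sum_const, Finset.card_univ, Fintype.card_fin,
            nsmul_eq_mul, ← Finset.mul_sum]
      _ = (d:ℝ)*L^2 + (L^2+1) * ∑ c : Fin d,
            (NN d n (ZZ j f + ww d j c) : ℝ) / (MM j (ZZ j f) : ℝ) := by
          congr 1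
          rw [Finset.mul_sum, Finset.mul_sum]
          exact Finset.sum_congr rfl fun c _ => by rw [hyexp]
  set B : ℝ := ∑ f : Fin n → Fin d, ∑ c : Fin d,
      (NN d n (ZZ j f + ww d j c) : ℝ) / (MM j (ZZ j f) : ℝ) with hB
  have step5 : B ≤ (d:ℝ)^(n+1) := by
    rw [hB, Finset.sum_comm]
    calc ∑ c : Fin d, ∑ f : Fin n → Fin d,
          (NN d n (ZZ j f + ww d j c) : ℝ) / (MM j (ZZ j f) : ℝ)
        ≤ ∑ _c : Fin d, (d:ℝ)^n := Finset.sum_le_sum fun c _ => fiber_bound j c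
      _ = (d:ℝ)^(n+1) := by
          rw [Finset.sum_const, Finset.card_univ, Fintype.card_fin, nsmul_eq_mul, ← pow_succ']
  have step4' : ∑ f : Fin n → Fin d, (2*(d:ℝ) * ∑ c : Fin d, (y f c - L)^2)
      ≤ 2*(d:ℝ) * ((d:ℝ)^n * ((d:ℝ)*L^2) + (L^2+1) * B) := by
    calc ∑ f : Fin n → Fin d, (2*(d:ℝ) * ∑ c : Fin d, (y f c - L)^2)
        ≤ ∑ f : Fin n → Fin d, (2*(d:ℝ) * ((d:ℝ)*L^2 + (L^2+1) * ∑ c : Fin d,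
            (NN d n (ZZ j f + ww d j c) : ℝ) / (MM j (ZZ j f) : ℝ))) := by
          refine Finset.sum_le_sum fun f _ => ?_
          exact mul_le_mul_of_nonneg_left (step4 f) (by positivity)
      _ = 2*(d:ℝ) * (∑ f : Fin n → Fin d, ((d:ℝ)*L^2 + (L^2+1) * ∑ c : Fin d,
            (NN d n (ZZ j f + ww d j c) : ℝ) / (MM j (ZZ j f) : ℝ))) := by
          rw [← Finset.mul_sum]
      _ = 2*(d:ℝ) * ((d:ℝ)^n * ((d:ℝ)*L^2) + (L^2+1) * B) := by
          congr 1
          rw [Finset.sum_add_distrib, Finset.sum_const, Finset.card_univ, Fintype.card_fun,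
            Fintype.card_fin, Fintype.card_fin, nsmul_eq_mul, ← Finset.mul_sum, hB]
          push_cast
          ring
  have main : ∑ f : Fin n → Fin d, ∑ c : Fin d, K f c
      ≤ (d:ℝ) * (((Real.log d)^2 + 2) * (d:ℝ)^(n+1)) := by
    calc ∑ f : Fin n → Fin d, ∑ c : Fin d, K f c
        ≤ 2*(d:ℝ) * ((d:ℝ)^n * ((d:ℝ)*L^2) + (L^2+1) * B) := le_trans step3 step4'
      _ ≤ 2*(d:ℝ) * ((d:ℝ)^n * ((d:ℝ)*L^2) + (L^2+1) * (d:ℝ)^(n+1)) := by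
          have h1 : (L^2+1) * B ≤ (L^2+1) * (d:ℝ)^(n+1) :=
            mul_le_mul_of_nonneg_left step5 (by positivity)
          have h2 : 2*(d:ℝ) * ((L^2+1)*B) ≤ 2*(d:ℝ) * ((L^2+1)*(d:ℝ)^(n+1)) :=
            mul_le_mul_of_nonneg_left h1 (by positivity)
          nlinarith [h2]
      _ = (d:ℝ) * (((Real.log d)^2 + 2) * (d:ℝ)^(n+1)) := by
          rw [hlog, pow_succ]
          ring
  rw [step1]
  have hfin : (d:ℝ) * (∑ f : Fin n → Fin d, K f (f j))
      ≤ (d:ℝ) * (((Real.log d)^2 + 2) * (d:ℝ)^(n+1)) := by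
    rw [← step2]; exact main
  exact le_of_mul_le_mul_left hfin hd

end PerCoord3
end VarAux
end VarAuxSection

/-- The varentropy bound: `Var(Q) ≤ (n/2)((log d)² + 2)`. -/
theorem variance_randEntropy_le (d n : ℕ) [NeZero d] :
    variance (randEntropy d n)
        ((PMF.uniformOfFintype (Fin n → Fin d)).toMeasure) ≤
      (n / 2 : ℝ) * ((Real.log d) ^ 2 + 2) := by
  have hd : (0:ℝ) < d := VarAux.hd0 d
  have hne : Nonempty (Fin d) := ⟨⟨0, Nat.pos_of_ne_zero (NeZero.ne d)⟩⟩
  have hint : ∀ g : (Fin n → Fin d) → ℝ,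
      ∫ f, g f ∂((PMF.uniformOfFintype (Fin n → Fin d)).toMeasure)
        = (∑ f, g f) / (d:ℝ)^n := by
    intro g
    rw [PMF.integral_eq_sum]
    have huni : ∀ f : Fin n → Fin d,
        ((PMF.uniformOfFintype (Fin n → Fin d)) f).toReal = ((d:ℝ)^n)⁻¹ := by
      intro f
      rw [PMF.uniformOfFintype_apply, ENNReal.toReal_inv]
      congr 1
      rw [Fintype.card_fun, Fintype.card_fin, Fintype.card_fin]
      simp
    calc ∑ f : Fin n → Fin d, ((PMF.uniformOfFintype (Fin n → Fin d)) f).toReal • g f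
        = ∑ f : Fin n → Fin d, ((d:ℝ)^n)⁻¹ * g f :=
          Finset.sum_congr rfl fun f _ => by rw [huni, smul_eq_mul]
      _ = (∑ f : Fin n → Fin d, g f) / (d:ℝ)^n := by
          rw [← Finset.mul_sum, inv_mul_eq_div]
  have hvar : variance (randEntropy d n)
        ((PMF.uniformOfFintype (Fin n → Fin d)).toMeasure)
      = (∑ f : Fin n → Fin d, (randEntropy d n f)^2)/(d:ℝ)^n
        - ((∑ f : Fin n → Fin d, randEntropy d n f)/(d:ℝ)^n)^2 := by
    rw [ProbabilityTheory.variance_eq_sub MemLp.of_discrete]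
    have h1 : ∫ f, ((randEntropy d n) ^ 2) f
          ∂((PMF.uniformOfFintype (Fin n → Fin d)).toMeasure)
        = (∑ f : Fin n → Fin d, (randEntropy d n f)^2)/(d:ℝ)^n := by
      rw [show ((randEntropy d n) ^ 2) = fun f => (randEntropy d n f)^2 from rfl]
      exact hint _
    have h2 := hint (randEntropy d n)
    rw [h1, h2]
  rw [hvar]
  have hES := VarAux.efron_stein (κ := Fin d) n (randEntropy d n)
  simp only [Fintype.card_fin] at hES
  refine le_trans hES ?_
  have hb : ∀ j : Fin n,
      (∑ f : Fin n → Fin d, ∑ b : Fin d,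
          (randEntropy d n f - randEntropy d n (Function.update f j b)) ^ 2)
        / (d:ℝ)^(n+1) ≤ (Real.log d)^2 + 2 := by
    intro j
    rw [div_le_iff₀ (by positivity)]
    exact VarAux.percoord j
  calc (1/2:ℝ) * ∑ j : Fin n, (∑ f : Fin n → Fin d, ∑ b : Fin d,
          (randEntropy d n f - randEntropy d n (Function.update f j b)) ^ 2) / (d:ℝ)^(n+1)
      ≤ (1/2:ℝ) * ∑ _j : Fin n, ((Real.log d)^2 + 2) := by
        refine mul_le_mul_of_nonneg_left (Finset.sum_le_sum fun j _ => hb j) (by norm_num)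
    _ = (n / 2 : ℝ) * ((Real.log d) ^ 2 + 2) := by
        rw [Finset.sum_const, Finset.card_univ, Fintype.card_fin, nsmul_eq_mul]
        ring
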